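/- Let q(x) = (3/2)·x(3 − x(3 − x)) / (3 − x(3 − x(3 − x)))². Then for every x ∈ [0,1], q(x) = ∫_{[0,1]³} 1{ξ₂ < min(ξ₁, ξ₃, x)} · (q(x) + q(ξ₁) + q(ξ₂) + q(ξ₃)) dξ₁dξ₂dξ₃. Consequently the function g(x₁,x₂,x₃,x₄) = Σ_{ν=1}^4 q(x_ν) on [0,1]⁴ satisfies g(x) = Σ_{ν=1}^4 ∫_{[0,1]³} 1{ξ₂ < min(ξ₁, ξ₃, x_{ν+2})} g(x^{ν,ξ}) dξ₁dξ₂dξ₃, where x^{ν,ξ} denotes x with coordinates ν−1, ν, ν+1 (mod 4) replaced by ξ₁, ξ₂, ξ₃; i.e., g is a fixed point of the one-step density recursion of the four-species Bak–Sneppen model. -/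

import Mathlib

open MeasureTheory

/-- The limiting single-site density `q` of the four-species Bak–Sneppen model. -/
noncomputable def bsQ (x : ℝ) : ℝ :=
  (3 / 2) * (x * (3 - x * (3 - x))) / (3 - x * (3 - x * (3 - x))) ^ 2

/-- antiderivative of bsQ -/
noncomputable def bsQp (t : ℝ) : ℝ := t ^ 2 * (3 - t) / (4 * (3 - t * (3 - t * (3 - t))))

lemma bsD_pos {t : ℝ} (h : t ≤ 1) : 0 < 3 - t * (3 - t * (3 - t)) := by
  nlinarith [pow_nonneg (sub_nonneg.2 h) 3]

lemma hasDeriv_bsQp {t : ℝ} (h : t ≤ 1) : HasDerivAt bsQp (bsQ t) t := by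
  have hD := (bsD_pos h).ne'
  have h1 : HasDerivAt (fun t : ℝ => t ^ 2 * (3 - t)) (2 * t * (3 - t) - t ^ 2) t := by
    have := (hasDerivAt_pow 2 t).fun_mul ((hasDerivAt_const t (3:ℝ)).fun_sub (hasDerivAt_id t))
    refine this.congr_deriv ?_; (try simp only [id_eq]); ring
  have h2 : HasDerivAt (fun t : ℝ => 4 * (3 - t * (3 - t * (3 - t))))
      (4 * (-3 + 6 * t - 3 * t ^ 2)) t := by
    have hi : HasDerivAt (fun t : ℝ => t * (3 - t * (3 - t)))
        ((3 - t * (3 - t)) + t * (-(3 - t) - t * (-1))) t := by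
      have hb : HasDerivAt (fun t : ℝ => t * (3 - t)) ((3 - t) + t * (-1)) t := by
        have := (hasDerivAt_id t).fun_mul ((hasDerivAt_const t (3:ℝ)).fun_sub (hasDerivAt_id t))
        refine this.congr_deriv ?_; (try simp only [id_eq]); ring
      have := (hasDerivAt_id t).fun_mul ((hasDerivAt_const t (3:ℝ)).fun_sub hb)
      refine this.congr_deriv ?_; (try simp only [id_eq]); ring
    have := ((hasDerivAt_const t (3:ℝ)).fun_sub hi).const_mul (4:ℝ)
    refine this.congr_deriv ?_; (try simp only [id_eq]); ring
  have := h1.fun_div h2 (by positivity)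
  refine this.congr_deriv ?_
  unfold bsQ
  field_simp
  ring

lemma bsQ_contOn : ContinuousOn bsQ (Set.Iic (1:ℝ)) := by
  apply ContinuousOn.div
  · fun_prop
  · fun_prop
  · intro t ht
    exact pow_ne_zero 2 (bsD_pos ht).ne'

lemma bsQ_intInt {a b : ℝ} (ha : a ≤ 1) (hb : b ≤ 1) :
    IntervalIntegrable bsQ volume a b := by
  apply (bsQ_contOn.mono _).intervalIntegrable
  intro t ht
  rcases Set.mem_uIcc.1 ht with h | h
  · exact le_trans h.2 hb
  · exact le_trans h.2 ha

lemma int_bsQ {a : ℝ} (ha : a ≤ 1) : ∫ t in a..1, bsQ t = 1 / 4 - bsQp a := by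
  rw [intervalIntegral.integral_eq_sub_of_hasDerivAt
      (f := bsQp) (fun t ht => hasDeriv_bsQp ?_) (bsQ_intInt ha le_rfl)]
  · norm_num [bsQp]
  · rcases Set.mem_uIcc.1 ht with h | h
    · exact h.2
    · exact le_trans h.2 ha

lemma int_affine_bsQ {a : ℝ} (ha : a ≤ 1) (c r : ℝ) :
    ∫ t in a..1, (c + r * bsQ t) = c * (1 - a) + r * (1 / 4 - bsQp a) := by
  rw [intervalIntegral.integral_add (intervalIntegrable_const)
      ((bsQ_intInt ha le_rfl).const_mul r),
    intervalIntegral.integral_const_mul, int_bsQ ha]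
  simp [smul_eq_mul]; ring

lemma if_int_right (a : ℝ) (h : ℝ → ℝ) (h0 : 0 ≤ a) (h1 : a ≤ 1)
    (hh : IntervalIntegrable h volume a 1) :
    ∫ t in (0:ℝ)..1, (if a < t then h t else 0) = ∫ t in a..1, h t := by
  have e2 : ∫ t in a..1, (if a < t then h t else 0) = ∫ t in a..1, h t := by
    apply intervalIntegral.integral_congr_ae
    filter_upwards with t ht
    rw [Set.uIoc_of_le h1] at ht
    exact if_pos ht.1
  have hint1 : IntervalIntegrable (fun t => if a < t then h t else 0) volume 0 a := by
    rw [intervalIntegrable_iff]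
    apply (integrable_zero _ _ _).congr
    filter_upwards [ae_restrict_mem measurableSet_uIoc] with t ht
    rw [Set.uIoc_of_le h0] at ht
    exact (if_neg (not_lt.2 ht.2)).symm
  have hint2 : IntervalIntegrable (fun t => if a < t then h t else 0) volume a 1 := by
    rw [intervalIntegrable_iff]
    rw [intervalIntegrable_iff] at hh
    apply hh.congr
    filter_upwards [ae_restrict_mem measurableSet_uIoc] with t ht
    rw [Set.uIoc_of_le h1] at ht
    exact (if_pos ht.1).symm
  rw [← intervalIntegral.integral_add_adjacent_intervals hint1 hint2, e2]
  have e1 : ∫ t in (0:ℝ)..a, (if a < t then h t else 0) = 0 := by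
    rw [intervalIntegral.integral_congr (g := fun _ => (0:ℝ))]
    · simp
    · intro t ht
      rw [Set.uIcc_of_le h0] at ht
      exact if_neg (not_lt.2 ht.2)
  rw [e1, zero_add]

lemma if_int_left (x : ℝ) (h : ℝ → ℝ) (h0 : 0 ≤ x) (h1 : x ≤ 1)
    (hh : IntervalIntegrable h volume 0 x) :
    ∫ t in (0:ℝ)..1, (if t < x then h t else 0) = ∫ t in (0:ℝ)..x, h t := by
  have hx : ∀ᵐ t : ℝ, t ≠ x := by
    refine compl_mem_ae_iff.mpr ?_
    exact measure_mono_null (fun t (ht : t = x) => (ht : t ∈ ({x} : Set ℝ))) (measure_singleton x)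
  have e2 : ∫ t in (0:ℝ)..x, (if t < x then h t else 0) = ∫ t in (0:ℝ)..x, h t := by
    apply intervalIntegral.integral_congr_ae
    filter_upwards [hx] with t htx ht
    rw [Set.uIoc_of_le h0] at ht
    exact if_pos (lt_of_le_of_ne ht.2 htx)
  have hint1 : IntervalIntegrable (fun t => if t < x then h t else 0) volume 0 x := by
    rw [intervalIntegrable_iff]
    rw [intervalIntegrable_iff] at hh
    apply hh.congr
    filter_upwards [ae_restrict_mem measurableSet_uIoc, ae_restrict_of_ae hx] with t ht htx
    rw [Set.uIoc_of_le h0] at ht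
    exact (if_pos (lt_of_le_of_ne ht.2 htx)).symm
  have hint2 : IntervalIntegrable (fun t => if t < x then h t else 0) volume x 1 := by
    rw [intervalIntegrable_iff]
    apply (integrable_zero _ _ _).congr
    filter_upwards [ae_restrict_mem measurableSet_uIoc] with t ht
    rw [Set.uIoc_of_le h1] at ht
    exact (if_neg (not_lt.2 ht.1.le)).symm
  rw [← intervalIntegral.integral_add_adjacent_intervals hint1 hint2, e2]
  have e1 : ∫ t in x..1, (if t < x then h t else 0) = 0 := by
    rw [intervalIntegral.integral_congr (g := fun _ => (0:ℝ))]
    · simp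
    · intro t ht
      rw [Set.uIcc_of_le h1] at ht
      exact if_neg (not_lt.2 ht.1)
  rw [e1, add_zero]

lemma swap_int (f : ℝ → ℝ → ℝ)
    (hf : IntegrableOn (Function.uncurry f) (Set.Ioc 0 1 ×ˢ Set.Ioc 0 1) volume) :
    ∫ t in (0:ℝ)..1, ∫ s in (0:ℝ)..1, f t s = ∫ s in (0:ℝ)..1, ∫ t in (0:ℝ)..1, f t s := by
  simp only [intervalIntegral.integral_of_le (zero_le_one (α := ℝ))]
  apply MeasureTheory.integral_integral_swap
  rw [Measure.prod_restrict]
  rwa [IntegrableOn, Measure.volume_eq_prod] at hf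

lemma hasDeriv_D {t : ℝ} : HasDerivAt (fun t : ℝ => 3 - t * (3 - t * (3 - t)))
    (-3 + 6 * t - 3 * t ^ 2) t := by
  have hb : HasDerivAt (fun t : ℝ => t * (3 - t)) ((3 - t) + t * (-1)) t := by
    have := (hasDerivAt_id t).fun_mul ((hasDerivAt_const t (3:ℝ)).fun_sub (hasDerivAt_id t))
    refine this.congr_deriv ?_; simp only [id_eq]; ring
  have hi : HasDerivAt (fun t : ℝ => t * (3 - t * (3 - t)))
      ((3 - t * (3 - t)) + t * (-((3 - t) + t * (-1)))) t := by
    have := (hasDerivAt_id t).fun_mul ((hasDerivAt_const t (3:ℝ)).fun_sub hb)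
    refine this.congr_deriv ?_; simp only [id_eq]; ring
  have := (hasDerivAt_const t (3:ℝ)).fun_sub hi
  refine this.congr_deriv ?_; ring

lemma bsQp_contOn : ContinuousOn bsQp (Set.Iic (1:ℝ)) := by
  apply ContinuousOn.div
  · fun_prop
  · fun_prop
  · intro t ht
    have := bsD_pos ht
    positivity

lemma int_outer (x A : ℝ) (h0 : 0 ≤ x) (h1 : x ≤ 1) :
    ∫ t in (0:ℝ)..x, ((A + bsQ t) * (1 - t) ^ 2 + 2 * (1 - t) * (1 / 4 - bsQp t))
      = -A * (1 - x) ^ 3 / 3 + 3 / (2 * (3 - x * (3 - x * (3 - x)))) + A / 3 - 1 / 2 := by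
  have key : ∀ t ∈ Set.uIcc (0:ℝ) x, HasDerivAt
      (fun t : ℝ => -A * (1 - t) ^ 3 / 3 + 3 / (2 * (3 - t * (3 - t * (3 - t)))))
      ((A + bsQ t) * (1 - t) ^ 2 + 2 * (1 - t) * (1 / 4 - bsQp t)) t := by
    intro t ht
    rw [Set.uIcc_of_le h0] at ht
    have ht1 : t ≤ 1 := le_trans ht.2 h1
    have hD := (bsD_pos ht1).ne'
    have ha : HasDerivAt (fun t : ℝ => -A * (1 - t) ^ 3 / 3) (A * (1 - t) ^ 2) t := by
      have h3 : HasDerivAt (fun t : ℝ => (1 - t) ^ 3) (3 * (1 - t) ^ 2 * (0 - 1)) t :=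
        HasDerivAt.fun_pow ((hasDerivAt_const t (1:ℝ)).fun_sub (hasDerivAt_id t)) 3 |>.congr_deriv
          (by simp only [id_eq]; ring)
      have := (h3.const_mul (-A)).div_const 3
      refine this.congr_deriv ?_; ring
    have hb : HasDerivAt (fun t : ℝ => 3 / (2 * (3 - t * (3 - t * (3 - t)))))
        ((0 * (2 * (3 - t * (3 - t * (3 - t)))) - 3 * (2 * (-3 + 6 * t - 3 * t ^ 2)))
          / (2 * (3 - t * (3 - t * (3 - t)))) ^ 2) t :=
      (hasDerivAt_const t (3:ℝ)).fun_div (hasDeriv_D.const_mul 2) (by positivity)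
    have := ha.fun_add hb
    refine this.congr_deriv ?_
    unfold bsQ bsQp
    field_simp
    ring
  rw [intervalIntegral.integral_eq_sub_of_hasDerivAt key ?_]
  · norm_num; ring
  · apply ContinuousOn.intervalIntegrable
    have hsub : Set.uIcc (0:ℝ) x ⊆ Set.Iic 1 := by
      rw [Set.uIcc_of_le h0]; intro t ht; exact le_trans ht.2 h1
    apply ContinuousOn.mono _ hsub
    apply ContinuousOn.add
    · exact ((continuousOn_const.add bsQ_contOn).mul (by fun_prop))
    · exact ((by fun_prop : ContinuousOn (fun t : ℝ => 2 * (1 - t)) (Set.Iic 1)).mul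
        (continuousOn_const.sub bsQp_contOn))

noncomputable def bsG (x A ξ₁ ξ₂ : ℝ) : ℝ :=
  if ξ₂ < ξ₁ ∧ ξ₂ < x then (A + bsQ ξ₁ + bsQ ξ₂) * (1 - ξ₂) + (1 / 4 - bsQp ξ₂) else 0

lemma bs_part1 : ∀ x ∈ Set.Icc (0 : ℝ) 1,
    bsQ x = ∫ ξ₁ in (0:ℝ)..1, ∫ ξ₂ in (0:ℝ)..1, ∫ ξ₃ in (0:ℝ)..1,
      if ξ₂ < min ξ₁ (min ξ₃ x) then bsQ x + bsQ ξ₁ + bsQ ξ₂ + bsQ ξ₃ else 0 := by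
  rintro x ⟨hx0, hx1⟩
  set A := bsQ x with hA
  -- inner integral over ξ₃
  have hinner : ∀ ξ₁ : ℝ, ∀ ξ₂ ∈ Set.Icc (0:ℝ) 1,
      (∫ ξ₃ in (0:ℝ)..1,
        if ξ₂ < min ξ₁ (min ξ₃ x) then A + bsQ ξ₁ + bsQ ξ₂ + bsQ ξ₃ else 0)
      = bsG x A ξ₁ ξ₂ := by
    intro ξ₁ ξ₂ h2
    by_cases hc : ξ₂ < ξ₁ ∧ ξ₂ < x
    · have e : ∀ ξ₃ : ℝ,
          (if ξ₂ < min ξ₁ (min ξ₃ x) then A + bsQ ξ₁ + bsQ ξ₂ + bsQ ξ₃ else 0)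
          = (if ξ₂ < ξ₃ then (A + bsQ ξ₁ + bsQ ξ₂) + 1 * bsQ ξ₃ else 0) := by
        intro ξ₃
        by_cases h3 : ξ₂ < ξ₃
        · rw [if_pos (lt_min_iff.2 ⟨hc.1, lt_min_iff.2 ⟨h3, hc.2⟩⟩), if_pos h3]; ring
        · rw [if_neg (fun hcon => h3 ((lt_min_iff.1 (lt_min_iff.1 hcon).2).1)), if_neg h3]
      rw [intervalIntegral.integral_congr (g := fun ξ₃ =>
            if ξ₂ < ξ₃ then (A + bsQ ξ₁ + bsQ ξ₂) + 1 * bsQ ξ₃ else 0)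
            (fun ξ₃ _ => e ξ₃),
        if_int_right ξ₂ _ h2.1 h2.2
          (intervalIntegrable_const.add ((bsQ_intInt h2.2 le_rfl).const_mul 1)),
        int_affine_bsQ h2.2]
      rw [bsG, if_pos hc]; ring
    · have e0 : ∀ ξ₃ : ℝ,
          (if ξ₂ < min ξ₁ (min ξ₃ x) then A + bsQ ξ₁ + bsQ ξ₂ + bsQ ξ₃ else 0) = 0 :=
        fun ξ₃ => if_neg (fun hcon =>
          hc ⟨(lt_min_iff.1 hcon).1, (lt_min_iff.1 (lt_min_iff.1 hcon).2).2⟩)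
      rw [intervalIntegral.integral_congr (g := fun _ => (0:ℝ)) (fun ξ₃ _ => e0 ξ₃)]
      rw [bsG, if_neg hc]
      simp
  -- middle integral over ξ₁ (after swapping)
  have hmid : ∀ s ∈ Set.Icc (0:ℝ) 1,
      (∫ t in (0:ℝ)..1, bsG x A t s)
      = if s < x then (A + bsQ s) * (1 - s) ^ 2 + 2 * (1 - s) * (1 / 4 - bsQp s) else 0 := by
    intro s hs
    by_cases hsx : s < x
    · have e : ∀ t : ℝ, bsG x A t s =
          if s < t then ((A + bsQ s) * (1 - s) + (1 / 4 - bsQp s)) + (1 - s) * bsQ t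
          else 0 := by
        intro t
        by_cases h : s < t
        · rw [bsG, if_pos ⟨h, hsx⟩, if_pos h]; ring
        · rw [bsG, if_neg (fun hc => h hc.1), if_neg h]
      rw [intervalIntegral.integral_congr (g := fun t =>
            if s < t then ((A + bsQ s) * (1 - s) + (1 / 4 - bsQp s)) + (1 - s) * bsQ t
            else 0) (fun t _ => e t),
        if_int_right s _ hs.1 hs.2
          (intervalIntegrable_const.add ((bsQ_intInt hs.2 le_rfl).const_mul (1 - s))),
        int_affine_bsQ hs.2, if_pos hsx]
      ring
    · have e0 : ∀ t : ℝ, bsG x A t s = 0 := fun t => by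
        rw [bsG, if_neg (fun hc => hsx hc.2)]
      rw [intervalIntegral.integral_congr (g := fun _ => (0:ℝ)) (fun t _ => e0 t),
        if_neg hsx]
      simp
  -- integrability for Fubini
  have hDne : (3 : ℝ) - x * (3 - x * (3 - x)) ≠ 0 := (bsD_pos hx1).ne'
  have hφcont : ContinuousOn
      (fun p : ℝ × ℝ => (A + bsQ p.1 + bsQ p.2) * (1 - p.2) + (1 / 4 - bsQp p.2))
      (Set.Icc (0:ℝ) 1 ×ˢ Set.Icc (0:ℝ) 1) := by
    have h1 : ContinuousOn (fun p : ℝ × ℝ => bsQ p.1)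
        (Set.Icc (0:ℝ) 1 ×ˢ Set.Icc (0:ℝ) 1) :=
      bsQ_contOn.comp continuousOn_fst (fun p hp => hp.1.2)
    have h2 : ContinuousOn (fun p : ℝ × ℝ => bsQ p.2)
        (Set.Icc (0:ℝ) 1 ×ˢ Set.Icc (0:ℝ) 1) :=
      bsQ_contOn.comp continuousOn_snd (fun p hp => hp.2.2)
    have h3 : ContinuousOn (fun p : ℝ × ℝ => bsQp p.2)
        (Set.Icc (0:ℝ) 1 ×ˢ Set.Icc (0:ℝ) 1) :=
      bsQp_contOn.comp continuousOn_snd (fun p hp => hp.2.2)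
    exact (((continuousOn_const.add h1).add h2).mul (by fun_prop)).add
      (continuousOn_const.sub h3)
  have hfG : IntegrableOn (Function.uncurry (bsG x A))
      (Set.Ioc 0 1 ×ˢ Set.Ioc 0 1) volume := by
    have huG : Function.uncurry (bsG x A) =
        Set.indicator {p : ℝ × ℝ | p.2 < p.1 ∧ p.2 < x}
          (fun p => (A + bsQ p.1 + bsQ p.2) * (1 - p.2) + (1 / 4 - bsQp p.2)) := by
      funext p
      rw [Set.indicator_apply]
      rfl
    rw [huG]
    have hS : MeasurableSet {p : ℝ × ℝ | p.2 < p.1 ∧ p.2 < x} :=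
      MeasurableSet.inter (measurableSet_lt measurable_snd measurable_fst)
        (measurableSet_lt measurable_snd measurable_const)
    exact ((hφcont.integrableOn_compact (isCompact_Icc.prod isCompact_Icc)).mono_set
      (Set.prod_mono Set.Ioc_subset_Icc_self Set.Ioc_subset_Icc_self)).indicator hS
  -- put everything together
  have step1 : (∫ ξ₁ in (0:ℝ)..1, ∫ ξ₂ in (0:ℝ)..1, ∫ ξ₃ in (0:ℝ)..1,
      if ξ₂ < min ξ₁ (min ξ₃ x) then A + bsQ ξ₁ + bsQ ξ₂ + bsQ ξ₃ else 0)
      = ∫ ξ₁ in (0:ℝ)..1, ∫ ξ₂ in (0:ℝ)..1, bsG x A ξ₁ ξ₂ := by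
    apply intervalIntegral.integral_congr
    intro ξ₁ _
    apply intervalIntegral.integral_congr
    intro ξ₂ h2
    exact hinner ξ₁ ξ₂ (by rwa [Set.uIcc_of_le zero_le_one] at h2)
  have step2 := swap_int (bsG x A) hfG
  have step3 : (∫ s in (0:ℝ)..1, ∫ t in (0:ℝ)..1, bsG x A t s)
      = ∫ s in (0:ℝ)..1,
          (if s < x then (A + bsQ s) * (1 - s) ^ 2 + 2 * (1 - s) * (1 / 4 - bsQp s)
           else 0) := by
    apply intervalIntegral.integral_congr
    intro s hs
    exact hmid s (by rwa [Set.uIcc_of_le zero_le_one] at hs)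
  have hψint : IntervalIntegrable
      (fun s => (A + bsQ s) * (1 - s) ^ 2 + 2 * (1 - s) * (1 / 4 - bsQp s)) volume 0 x := by
    apply ContinuousOn.intervalIntegrable
    have hsub : Set.uIcc (0:ℝ) x ⊆ Set.Iic 1 := by
      rw [Set.uIcc_of_le hx0]; intro t ht; exact le_trans ht.2 hx1
    apply ContinuousOn.mono _ hsub
    exact (((continuousOn_const.add bsQ_contOn).mul (by fun_prop)).add
      ((by fun_prop : ContinuousOn (fun t : ℝ => 2 * (1 - t)) (Set.Iic 1)).mul
        (continuousOn_const.sub bsQp_contOn)))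
  have step4 := if_int_left x _ hx0 hx1 hψint
  rw [step1, step2, step3, step4, int_outer x A hx0 hx1]
  rw [hA]
  unfold bsQ
  field_simp
  ring

/-- `q` satisfies the one-step fixed-point equation; consequently
`g(x) = Σ_{ν} q(x_ν)` is a fixed point of the one-step density recursion of the
four-species Bak–Sneppen model (indices mod 4). -/
theorem bs4_stationary_fixed_point :
    (∀ x ∈ Set.Icc (0 : ℝ) 1,
      bsQ x = ∫ ξ₁ in (0:ℝ)..1, ∫ ξ₂ in (0:ℝ)..1, ∫ ξ₃ in (0:ℝ)..1,
        if ξ₂ < min ξ₁ (min ξ₃ x) then bsQ x + bsQ ξ₁ + bsQ ξ₂ + bsQ ξ₃ else 0)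
    ∧ ∀ x : Fin 4 → ℝ, (∀ ν, x ν ∈ Set.Icc (0 : ℝ) 1) →
        (∑ ν : Fin 4, bsQ (x ν))
          = ∑ ν : Fin 4, ∫ ξ₁ in (0:ℝ)..1, ∫ ξ₂ in (0:ℝ)..1, ∫ ξ₃ in (0:ℝ)..1,
              if ξ₂ < min ξ₁ (min ξ₃ (x (ν + 2))) then
                ∑ μ : Fin 4,
                  bsQ ((Function.update (Function.update
                    (Function.update x (ν - 1) ξ₁) ν ξ₂) (ν + 1) ξ₃) μ)
              else 0 := by
  refine ⟨bs_part1, ?_⟩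
  intro x hx
  have hterm : ∀ ν : Fin 4, (∫ ξ₁ in (0:ℝ)..1, ∫ ξ₂ in (0:ℝ)..1, ∫ ξ₃ in (0:ℝ)..1,
      if ξ₂ < min ξ₁ (min ξ₃ (x (ν + 2))) then
        ∑ μ : Fin 4, bsQ ((Function.update (Function.update
          (Function.update x (ν - 1) ξ₁) ν ξ₂) (ν + 1) ξ₃) μ)
      else 0) = bsQ (x (ν + 2)) := by
    intro ν
    have e : ∀ ξ₁ ξ₂ ξ₃ : ℝ,
        (∑ μ : Fin 4, bsQ ((Function.update (Function.update
          (Function.update x (ν - 1) ξ₁) ν ξ₂) (ν + 1) ξ₃) μ))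
        = bsQ (x (ν + 2)) + bsQ ξ₁ + bsQ ξ₂ + bsQ ξ₃ := by
      intro ξ₁ ξ₂ ξ₃
      fin_cases ν <;>
        · simp (config := { decide := true }) [Fin.sum_univ_four, Function.update_apply]
          try ring
    simp only [e]
    exact (bs_part1 (x (ν + 2)) (hx _)).symm
  rw [Finset.sum_congr rfl (fun ν _ => hterm ν)]
  rw [Fin.sum_univ_four, Fin.sum_univ_four,
    show ((0:Fin 4) + 2) = 2 from rfl, show ((1:Fin 4) + 2) = 3 from rfl,
    show ((2:Fin 4) + 2) = 0 from rfl, show ((3:Fin 4) + 2) = 1 from rfl]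
  ring
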